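/- arXiv:2510.09811 — 2 statements merged into one kernel-verified Lean document; each statement's English description precedes it below -/
import Mathlib

section
/- Let ℓ ≥ 1 and let C be a commutative unital ℂ-algebra containing an invertible element g and elements e₀ = 1, e₁, …, e_{2ℓ} satisfying the reciprocal relations g^{2ℓ−i}·e_i = e_{2ℓ}·e_{2ℓ−i} for all i = 0, 1, …, 2ℓ−1. Suppose e_{2ℓ} = ε·g^ℓ for a sign ε ∈ {1, −1}. Then e_{ℓ+i} = ε·g^i·e_{ℓ−i} for all i = 0, 1, …, ℓ. In particular, if ε = −1 then e_ℓ = 0. -/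
/-- resolution of the reciprocal relations in the even case `k = 2ℓ`.
If `g` is invertible, `e₀ = 1`, the reciprocal relations `g^{2ℓ−i}·e_i = e_{2ℓ}·e_{2ℓ−i}`
hold for `i = 0, …, 2ℓ−1`, and `e_{2ℓ} = ε·g^ℓ` for a sign `ε`, then
`e_{ℓ+i} = ε·g^i·e_{ℓ−i}` for `i = 0, …, ℓ`; in particular `e_ℓ = 0` when `ε = -1`. -/
theorem even_component_resolution
    {C : Type*} [CommRing C] [Algebra ℂ C]
    (ℓ : ℕ) (hℓ : 1 ≤ ℓ) (g : C) (hg : IsUnit g)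
    (e : ℕ → C) (he0 : e 0 = 1)
    (hrec : ∀ i, i < 2 * ℓ → g ^ (2 * ℓ - i) * e i = e (2 * ℓ) * e (2 * ℓ - i))
    (ε : C) (hε : ε = 1 ∨ ε = -1)
    (htop : e (2 * ℓ) = ε * g ^ ℓ) :
    (∀ i, i ≤ ℓ → e (ℓ + i) = ε * g ^ i * e (ℓ - i)) ∧ (ε = -1 → e ℓ = 0) := by
  have hε2 : ε * ε = 1 := by rcases hε with h | h <;> rw [h] <;> ring
  have main : ∀ i, i ≤ ℓ → e (ℓ + i) = ε * g ^ i * e (ℓ - i) := by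
    intro i hi
    have hlt : ℓ - i < 2 * ℓ := by omega
    have h := hrec (ℓ - i) hlt
    have h2 : 2 * ℓ - (ℓ - i) = ℓ + i := by omega
    rw [h2, htop] at h
    -- h : g ^ (ℓ + i) * e (ℓ - i) = ε * g ^ ℓ * e (ℓ + i)
    have hgℓ : IsUnit (g ^ ℓ) := hg.pow ℓ
    rcases hgℓ with ⟨u, hu⟩
    have h3 : g ^ ℓ * (g ^ i * e (ℓ - i)) = g ^ ℓ * (ε * e (ℓ + i)) := by
      rw [pow_add] at h; linear_combination h
    have h4 : g ^ i * e (ℓ - i) = ε * e (ℓ + i) := by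
      have := congrArg (fun x => (↑u⁻¹ : C) * x) h3
      simpa [← hu, ← mul_assoc, Units.inv_mul] using this
    calc e (ℓ + i) = (ε * ε) * e (ℓ + i) := by rw [hε2, one_mul]
      _ = ε * (ε * e (ℓ + i)) := by ring
      _ = ε * (g ^ i * e (ℓ - i)) := by rw [h4]
      _ = ε * g ^ i * e (ℓ - i) := by ring
  refine ⟨main, fun hneg => ?_⟩
  have := main 0 (Nat.zero_le ℓ)
  rw [hneg] at this
  simp only [Nat.add_zero, Nat.sub_zero, pow_zero] at this
  have h2 : (2 : ℂ) • e ℓ = 0 := by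
    have : e ℓ + e ℓ = 0 := by linear_combination this
    rw [show ((2:ℂ) • e ℓ) = e ℓ + e ℓ by rw [two_smul], this]
  rcases smul_eq_zero.mp h2 with h | h
  · exact absurd h two_ne_zero
  · exact h
end

section
/- Let F be a Yang–Baxter matrix on V = ℂ^N, let A be a unital associative ℂ-algebra, and let M be any N×N matrix with entries in A. Then for every i ≥ 1 and every j with 1 ≤ j ≤ i, one has M_{\bar j}·Z^{(i)} = Z^{(i)}·M_{\underline{i−j+1}} as operators on V^{⊗i} with coefficients in A. -/
open Matrix BigOperators
open scoped Classical

noncomputable section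

/-- Operators on `V^{⊗n}`, `V = ℂ^N`, with entries in `A`. -/
abbrev Op (N n : ℕ) (A : Type*) := Matrix (Fin n → Fin N) (Fin n → Fin N) A

variable {N : ℕ}

/-- Embedding of a two-site operator at tensor factors `i`, `j` (identity elsewhere). -/
def emb2 {A : Type*} [Semiring A] {n : ℕ} (i j : Fin n) (X : Op N 2 A) : Op N n A :=
  fun f g => if ∀ k, k ≠ i → k ≠ j → f k = g k then X ![f i, f j] ![g i, g j] else 0

/-- `X_p`: a two-site operator acting at the adjacent factors `p`, `p+1` (0-based). -/
def opAt {A : Type*} [Semiring A] (n p : ℕ) (X : Op N 2 A) : Op N n A :=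
  if h : p + 1 < n then emb2 ⟨p, Nat.lt_of_succ_lt h⟩ ⟨p + 1, h⟩ X else 1

/-- Embedding of a one-site operator at tensor factor `i`. -/
def emb1 {A : Type*} [Semiring A] {n : ℕ} (i : Fin n) (Z : Matrix (Fin N) (Fin N) A) :
    Op N n A :=
  fun f g => if ∀ k, k ≠ i → f k = g k then Z (f i) (g i) else 0

/-- `Z_p`: a one-site operator acting at factor `p` (0-based). -/
def matAt {A : Type*} [Semiring A] (n p : ℕ) (Z : Matrix (Fin N) (Fin N) A) : Op N n A :=
  if h : p < n then emb1 ⟨p, h⟩ Z else 1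

/-- Partial trace over the factors in `S`, re-embedded with identity on the factors in `S`. -/
def ptr {A : Type*} [Semiring A] {n : ℕ} (S : Finset (Fin n)) (X : Op N n A) : Op N n A :=
  fun f g =>
    if ∀ k ∈ S, f k = g k then
      ∑ h : Fin n → Fin N,
        if ∀ k, k ∉ S → h k = f k then X h (fun k => if k ∈ S then h k else g k) else 0
    else 0

/-- Full trace. -/
def trAll {A : Type*} [Semiring A] {n : ℕ} (X : Op N n A) : A := ∑ f, X f f

/-- Trace over all tensor factors except the factor `0`, yielding an `N×N` matrix. -/
def trRest {n : ℕ} (X : Op N (n + 1) ℂ) : Matrix (Fin N) (Fin N) ℂ :=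
  fun a b => ∑ f : Fin n → Fin N, X (Fin.cons a f) (Fin.cons b f)

/-- The permutation (flip) operator on `V ⊗ V`. -/
def flipP (N : ℕ) : Op N 2 ℂ := fun f g => if f 0 = g 1 ∧ f 1 = g 0 then 1 else 0

/-- `D_R = Tr_(2) Ψ_R`. -/
def Dmat (Ψ : Op N 2 ℂ) : Matrix (Fin N) (Fin N) ℂ := fun a b => ∑ c, Ψ ![a, c] ![b, c]

/-- The product `∏_{k ∈ S} (Dm)_k` of copies of a one-site operator over the factors in `S`. -/
def Dset {n : ℕ} (Dm : Matrix (Fin N) (Fin N) ℂ) (S : Finset (Fin n)) : Op N n ℂ :=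
  fun f g => if ∀ k, k ∉ S → f k = g k then ∏ k ∈ S, Dm (f k) (g k) else 0

/-- `R` is an (invertible) Yang-Baxter matrix. -/
def IsYB (R : Op N 2 ℂ) : Prop :=
  IsUnit R ∧
    opAt 3 0 R * opAt 3 1 R * opAt 3 0 R = opAt 3 1 R * opAt 3 0 R * opAt 3 1 R

/-- `Ψ` is a skew inverse of `R`:  `Tr_(2) R₁ Ψ₂ = Tr_(2) Ψ₁ R₂ = P`. -/
def IsSkewPair (R Ψ : Op N 2 ℂ) : Prop :=
  ptr {1} (opAt 3 0 R * opAt 3 1 Ψ) = emb2 (0 : Fin 3) (2 : Fin 3) (flipP N) ∧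
  ptr {1} (opAt 3 0 Ψ * opAt 3 1 R) = emb2 (0 : Fin 3) (2 : Fin 3) (flipP N)

/-- q-number `(i)_q`. -/
def qnum (q : ℂ) (i : ℕ) : ℂ := (q ^ i - q⁻¹ ^ i) / (q - q⁻¹)

/-- `η = (q−μ)(q⁻¹+μ)/(μ(q−q⁻¹))`. -/
def etaC (q μ : ℂ) : ℂ := (q - μ) * (q⁻¹ + μ) / (μ * (q - q⁻¹))

/-- `K = (q·Id − R)(q⁻¹·Id + R)/(μ(q−q⁻¹))`. -/
def Kmat (q μ : ℂ) (R : Op N 2 ℂ) : Op N 2 ℂ :=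
  (μ * (q - q⁻¹))⁻¹ • ((q • (1 : Op N 2 ℂ) - R) * (q⁻¹ • (1 : Op N 2 ℂ) + R))

/-- Baxterized element `R⁻(x)`. -/
def Rminus (q μ : ℂ) (R : Op N 2 ℂ) (x : ℂ) : Op N 2 ℂ :=
  (1 : Op N 2 ℂ) + ((x - 1) / (q - q⁻¹)) • R + (μ * (x - 1) / (μ + q * x)) • Kmat q μ R

/-- Base conditions on the parameters `q`, `μ`. -/
def ParamOK (q μ : ℂ) : Prop :=
  q ≠ 0 ∧ q ≠ 1 ∧ q ≠ -1 ∧ μ ≠ 0 ∧ μ ≠ q ∧ μ ≠ -q⁻¹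

/-- Conditions `q^{2j} ≠ 1`, `μ ≠ −q^{−2j+3}` for `j = 2, …, k`. -/
def ParamRange (q μ : ℂ) (k : ℕ) : Prop :=
  ∀ j, 2 ≤ j → j ≤ k → q ^ (2 * j) ≠ 1 ∧ μ ≠ -q ^ (3 - 2 * (j : ℤ))

/-- `R` (with inverse `Rinv`) is a BMW-type Yang-Baxter matrix with parameters `q, μ`. -/
def IsBMW (q μ : ℂ) (R Rinv : Op N 2 ℂ) : Prop :=
  R * Rinv = 1 ∧ Rinv * R = 1 ∧
  R * Kmat q μ R = μ • Kmat q μ R ∧ Kmat q μ R * R = μ • Kmat q μ R ∧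
  Kmat q μ R * Kmat q μ R = etaC q μ • Kmat q μ R ∧
  (opAt 3 0 (Kmat q μ R) * opAt 3 1 (Kmat q μ R) * opAt 3 0 (Kmat q μ R)
      = opAt 3 0 (Kmat q μ R)) ∧
  (opAt 3 1 (Kmat q μ R) * opAt 3 0 (Kmat q μ R) * opAt 3 1 (Kmat q μ R)
      = opAt 3 1 (Kmat q μ R)) ∧
  ∀ E E' : Op N 2 ℂ, (E = R ∧ E' = Rinv) ∨ (E = Rinv ∧ E' = R) →
    (opAt 3 0 (Kmat q μ R) * opAt 3 1 E
        = opAt 3 0 (Kmat q μ R) * opAt 3 1 (Kmat q μ R) * opAt 3 0 E' ∧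
     opAt 3 1 (Kmat q μ R) * opAt 3 0 E
        = opAt 3 1 (Kmat q μ R) * opAt 3 0 (Kmat q μ R) * opAt 3 1 E' ∧
     opAt 3 1 E * opAt 3 0 (Kmat q μ R)
        = opAt 3 0 E' * opAt 3 1 (Kmat q μ R) * opAt 3 0 (Kmat q μ R) ∧
     opAt 3 0 E * opAt 3 1 (Kmat q μ R)
        = opAt 3 1 E' * opAt 3 0 (Kmat q μ R) * opAt 3 1 (Kmat q μ R))

/-- q-antisymmetrizer `A^{(m)}` acting on the `m` factors starting at factor `p` (0-based)
of `V^{⊗n}`. -/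
def asym (q μ : ℂ) (R : Op N 2 ℂ) (n : ℕ) : ℕ → ℕ → Op N n ℂ
  | _, 0 => 1
  | _, 1 => 1
  | p, (m + 2) =>
      (q ^ (m + 1) / qnum q (m + 2)) •
        (asym q μ R n p (m + 1) * opAt n (p + m) (Rminus q μ R ((q ^ (2 * (m + 1)))⁻¹)) *
          asym q μ R n p (m + 1))

/-- The contractor `C^{(2i)}` acting on the `2i` factors starting at factor `p` (0-based)
of `V^{⊗n}`; `contr q μ R n p i = C^{(2i)}`. -/
def contr (q μ : ℂ) (R : Op N 2 ℂ) (n : ℕ) : ℕ → ℕ → Op N n ℂ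
  | _, 0 => 1
  | p, 1 => (etaC q μ)⁻¹ • opAt n p (Kmat q μ R)
  | p, (i + 2) =>
      contr q μ R n (p + 1) (i + 1) * opAt n p (Kmat q μ R) *
        opAt n (p + 2 * i + 2) (Kmat q μ R) * contr q μ R n (p + 1) (i + 1)

/-- `R` has height `k`. -/
def HasHeight (q μ : ℂ) (R : Op N 2 ℂ) (k : ℕ) : Prop :=
  2 ≤ k ∧ (∀ i, 2 ≤ i → i ≤ k → asym q μ R k 0 i ≠ 0) ∧
    asym q μ R (k + 1) 1 k * opAt (k + 1) 0 (Rminus q μ R ((q ^ (2 * k))⁻¹)) *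
      asym q μ R (k + 1) 1 k = 0

/-- `R` is of orthogonal type `O(k)`: BMW type, height `k`, `μ = q^{1−k}`, `rk A^{(k)} = 1`. -/
def IsOrth (q μ : ℂ) (R Rinv : Op N 2 ℂ) (k : ℕ) : Prop :=
  IsBMW q μ R Rinv ∧ HasHeight q μ R k ∧ μ = q ^ (1 - (k : ℤ)) ∧
    (asym q μ R k 0 k).rank = 1

/-- `{R,F}` is a compatible pair:  `R₁F₂F₁ = F₂F₁R₂` and `R₂F₁F₂ = F₁F₂R₁`. -/
def CompatPair (R F : Op N 2 ℂ) : Prop :=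
  opAt 3 0 R * opAt 3 1 F * opAt 3 0 F = opAt 3 1 F * opAt 3 0 F * opAt 3 1 R ∧
  opAt 3 1 R * opAt 3 0 F * opAt 3 1 F = opAt 3 0 F * opAt 3 1 F * opAt 3 0 R

/-- Push a numeric operator into an `A`-valued operator. -/
def toA {A : Type*} [Semiring A] [Algebra ℂ A] {n : ℕ} (X : Op N n ℂ) : Op N n A :=
  X.map (algebraMap ℂ A)

/-- The copies `M_{\bar{i+1}}` of a quantum matrix:  `Mbar F Finv M n i = M_{\overline{i+1}}`. -/
def Mbar {A : Type*} [Semiring A] [Algebra ℂ A] (F Finv : Op N 2 ℂ)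
    (M : Matrix (Fin N) (Fin N) A) (n : ℕ) : ℕ → Op N n A
  | 0 => matAt n 0 M
  | (i + 1) => toA (opAt n i F) * Mbar F Finv M n i * toA (opAt n i Finv)

/-- The string `M_{1̄} M_{2̄} ⋯ M_{j̄}`. -/
def Mstr {A : Type*} [Semiring A] [Algebra ℂ A] (F Finv : Op N 2 ℂ)
    (M : Matrix (Fin N) (Fin N) A) (n : ℕ) : ℕ → Op N n A
  | 0 => 1
  | (j + 1) => Mstr F Finv M n j * Mbar F Finv M n j

/-- `M` is a quantum matrix for the pair `{R,F}`. -/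
def IsQMatrix {A : Type*} [Semiring A] [Algebra ℂ A] (R F Finv : Op N 2 ℂ)
    (M : Matrix (Fin N) (Fin N) A) : Prop :=
  toA (opAt 2 0 R) * Mbar F Finv M 2 0 * Mbar F Finv M 2 1 =
    Mbar F Finv M 2 0 * Mbar F Finv M 2 1 * toA (opAt 2 0 R)

/-- The contraction `g = η⁻¹ Tr_{R(1,2)}(M_{1̄}M_{2̄}K₁)`. -/
def qContr (q μ : ℂ) (R F Finv : Op N 2 ℂ) (Dm : Matrix (Fin N) (Fin N) ℂ)
    {A : Type*} [Semiring A] [Algebra ℂ A] (M : Matrix (Fin N) (Fin N) A) : A :=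
  (etaC q μ)⁻¹ •
    trAll (toA (Dset Dm (Finset.univ : Finset (Fin 2))) *
      (Mstr F Finv M 2 2 * toA (opAt 2 0 (Kmat q μ R))))

/-- The elementary sums `e_i = Tr_{R(1,…,i)}(M_{1̄}⋯M_{ī} A^{(i)})`. -/
def elemSum (q μ : ℂ) (R F Finv : Op N 2 ℂ) (Dm : Matrix (Fin N) (Fin N) ℂ)
    {A : Type*} [Semiring A] [Algebra ℂ A] (M : Matrix (Fin N) (Fin N) A) (i : ℕ) : A :=
  trAll (toA (Dset Dm (Finset.univ : Finset (Fin i))) *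
    (Mstr F Finv M i i * toA (asym q μ R i 0 i)))

/-- The increasing string `F₁F₂⋯F_j` (1-based), i.e. positions `0,…,j-1`. -/
def Fstr (n : ℕ) (F : Op N 2 ℂ) : ℕ → Op N n ℂ
  | 0 => 1
  | (j + 1) => Fstr n F j * opAt n j F

/-- The decreasing string `F_j⋯F₂F₁` (1-based), i.e. positions `j-1,…,0`. -/
def FstrDown (n : ℕ) (F : Op N 2 ℂ) : ℕ → Op N n ℂ
  | 0 => 1
  | (j + 1) => opAt n j F * FstrDown n F j

/-- The operator `O`. -/
def Oop (q μ : ℂ) (R Finv : Op N 2 ℂ) (k : ℕ) : Matrix (Fin N) (Fin N) ℂ :=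
  (qnum q k * (1 + q ^ ((2 : ℤ) - (k : ℤ))) / (q + q ^ ((1 : ℤ) - (k : ℤ)))) •
    trRest (asym q μ R (k + 1) 1 k * Fstr (k + 1) Finv k)

/-- The operator `O⁻¹`. -/
def OopInv (q μ : ℂ) (R F : Op N 2 ℂ) (k : ℕ) : Matrix (Fin N) (Fin N) ℂ :=
  (qnum q k * (1 + q ^ ((2 : ℤ) - (k : ℤ))) / (q + q ^ ((1 : ℤ) - (k : ℤ)))) •
    trRest (FstrDown (k + 1) F k * asym q μ R (k + 1) 1 k)

/-- The matrix `G`, `G₁ = Tr_(2,3)(K₂F₁⁻¹F₂⁻¹)`. -/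
def Gmat (q μ : ℂ) (R Finv : Op N 2 ℂ) : Matrix (Fin N) (Fin N) ℂ :=
  trRest (opAt 3 1 (Kmat q μ R) * opAt 3 0 Finv * opAt 3 1 Finv)

/-- The matrix `G⁻¹`, `(G⁻¹)₁ = Tr_(2,3)(F₂F₁K₂)`. -/
def GmatInv (q μ : ℂ) (R F : Op N 2 ℂ) : Matrix (Fin N) (Fin N) ℂ :=
  trRest (opAt 3 1 F * opAt 3 0 F * opAt 3 1 (Kmat q μ R))


/-- `Z^{(i)}`: `Z^{(1)} = Id`, `Z^{(i+1)} = (F₁F₂⋯F_i)·Z^{(i)}`. -/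
def Zop {N : ℕ} (F : Op N 2 ℂ) (n : ℕ) : ℕ → Op N n ℂ
  | 0 => 1
  | (i + 1) => Fstr n F i * Zop F n i

/-- Underlined copies: `M_{\underline{1}} = M₁`, `M_{\underline{i+1}} = F_i⁻¹M_{\underline{i}}F_i`;
`Munder F Finv M n j = M_{\underline{j+1}}`. -/
def Munder {N : ℕ} {A : Type*} [Semiring A] [Algebra ℂ A] (F Finv : Op N 2 ℂ)
    (M : Matrix (Fin N) (Fin N) A) (n : ℕ) : ℕ → Op N n A
  | 0 => matAt n 0 M
  | (j + 1) => toA (opAt n j Finv) * Munder F Finv M n j * toA (opAt n j F)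

section EmbI
variable {A : Type*} [Semiring A]

/-- Embedding of an `m`-site operator along an injection `ι`. -/
def embI {m n : ℕ} (ι : Fin m → Fin n) (X : Op N m A) : Op N n A :=
  fun f g => if ∀ k, (∀ l, ι l ≠ k) → f k = g k then X (f ∘ ι) (g ∘ ι) else 0

lemma embI_apply {m n : ℕ} (ι : Fin m → Fin n) (X : Op N m A) (f g : Fin n → Fin N) :
    embI ι X f g = if ∀ k, (∀ l, ι l ≠ k) → f k = g k then X (f ∘ ι) (g ∘ ι) else 0 := rfl

lemma embI_one {m n : ℕ} (ι : Fin m → Fin n) : embI ι (1 : Op N m A) = 1 := by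
  ext f g
  rw [embI_apply, Matrix.one_apply, Matrix.one_apply]
  by_cases h3 : f = g
  · subst h3
    rw [if_pos (fun k _ => rfl), if_pos rfl, if_pos rfl]
  · rw [if_neg h3]
    by_cases h1 : ∀ k, (∀ l, ι l ≠ k) → f k = g k
    · rw [if_pos h1, if_neg]
      intro h2
      refine h3 (funext fun k => ?_)
      by_cases hk : ∃ l, ι l = k
      · obtain ⟨l, rfl⟩ := hk; exact congrFun h2 l
      · exact h1 k (fun l hl => hk ⟨l, hl⟩)
    · rw [if_neg h1]

lemma embI_mul {m n : ℕ} {ι : Fin m → Fin n} (hι : Function.Injective ι)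
    (X Y : Op N m A) : embI ι X * embI ι Y = embI ι (X * Y) := by
  ext f g
  rw [Matrix.mul_apply, embI_apply, Matrix.mul_apply]
  set E : (Fin m → Fin N) → (Fin n → Fin N) :=
    fun u k => if h : ∃ l, ι l = k then u h.choose else f k with hE
  have hE1 : ∀ u, E u ∘ ι = u := by
    intro u; funext l
    have hex : ∃ l', ι l' = ι l := ⟨l, rfl⟩
    simp only [hE, Function.comp_apply, dif_pos hex]
    exact congrArg u (hι hex.choose_spec)
  have hE2 : ∀ u k, (∀ l, ι l ≠ k) → E u k = f k := by
    intro u k hk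
    simp only [hE, dif_neg (fun h : ∃ l, ι l = k => hk h.choose h.choose_spec)]
  have hE3 : ∀ h : Fin n → Fin N, (∀ k, (∀ l, ι l ≠ k) → f k = h k) → E (h ∘ ι) = h := by
    intro h hh; funext k
    by_cases hk : ∃ l, ι l = k
    · simp only [hE, dif_pos hk, Function.comp_apply, hk.choose_spec]
    · simp only [hE, dif_neg hk]
      exact hh k (fun l hl => hk ⟨l, hl⟩)
  have hEinj : Function.Injective E := fun u u' h => by
    rw [← hE1 u, ← hE1 u', h]
  set T : (Fin n → Fin N) → A := fun h =>
    (embI ι X f h) * (embI ι Y h g) with hT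
  have step1 : ∑ h, T h = ∑ h ∈ Finset.image E Finset.univ, T h := by
    refine (Finset.sum_subset (Finset.subset_univ _) ?_).symm
    intro h _ hh
    rw [hT]
    simp only [embI_apply]
    rw [if_neg, zero_mul]
    intro hP
    exact hh (Finset.mem_image.2 ⟨h ∘ ι, Finset.mem_univ _, hE3 h hP⟩)
  have step2 : ∑ h ∈ Finset.image E Finset.univ, T h = ∑ u, T (E u) :=
    Finset.sum_image (fun x _ y _ h => hEinj h)
  rw [step1, step2]
  have hQ : ∀ u, T (E u) = X (f ∘ ι) u *
      (if ∀ k, (∀ l, ι l ≠ k) → f k = g k then Y u (g ∘ ι) else 0) := by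
    intro u
    rw [hT]
    simp only [embI_apply, hE1 u]
    rw [if_pos (fun k hk => (hE2 u k hk).symm)]
    congr 1
    by_cases hc : ∀ k, (∀ l, ι l ≠ k) → f k = g k
    · rw [if_pos hc, if_pos (fun k hk => (hE2 u k hk).trans (hc k hk))]
    · rw [if_neg hc, if_neg (fun hc' => hc (fun k hk => (hE2 u k hk).symm.trans (hc' k hk)))]
  simp only [hQ]
  by_cases hc : ∀ k, (∀ l, ι l ≠ k) → f k = g k
  · simp only [if_pos hc]
  · simp only [if_neg hc, mul_zero, Finset.sum_const_zero]

lemma embI_comp {r m n : ℕ} {ι : Fin m → Fin n} (hι : Function.Injective ι)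
    (κ : Fin r → Fin m) (X : Op N r A) : embI ι (embI κ X) = embI (ι ∘ κ) X := by
  ext f g
  rw [embI_apply, embI_apply, embI_apply]
  by_cases h1 : ∀ k, (∀ l, ι l ≠ k) → f k = g k
  · rw [if_pos h1]
    by_cases h2 : ∀ k', (∀ l, κ l ≠ k') → (f ∘ ι) k' = (g ∘ ι) k'
    · rw [if_pos h2, if_pos]
      · rfl
      · intro k hk
        by_cases hex : ∃ k', ι k' = k
        · obtain ⟨k', rfl⟩ := hex
          exact h2 k' (fun l hl => hk l (by rw [Function.comp_apply, hl]))
        · exact h1 k (fun l hl => hex ⟨l, hl⟩)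
    · rw [if_neg h2,
        if_neg (fun h3 => h2 (fun k' hk' => h3 (ι k') (fun l hl => hk' l (hι hl))))]
  · rw [if_neg h1,
      if_neg (fun h3 => h1 (fun k hk => h3 k (fun l => hk (κ l))))]

lemma embI_mul_disjoint_apply {m m' n : ℕ} (ι : Fin m → Fin n) (κ : Fin m' → Fin n)
    (hd : ∀ l l', ι l ≠ κ l') (X : Op N m A) (Y : Op N m' A) (f g : Fin n → Fin N) :
    (embI ι X * embI κ Y) f g =
      if ∀ k, (∀ l, ι l ≠ k) → (∀ l', κ l' ≠ k) → f k = g k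
      then X (f ∘ ι) (g ∘ ι) * Y (f ∘ κ) (g ∘ κ) else 0 := by
  rw [Matrix.mul_apply]
  set h0 : Fin n → Fin N := fun k => if ∃ l, ι l = k then g k else f k with hh0
  rw [Finset.sum_eq_single h0]
  · have e1 : h0 ∘ ι = g ∘ ι := by
      funext l; simp only [hh0, Function.comp_apply]
      rw [if_pos (show ∃ l', ι l' = ι l from ⟨l, rfl⟩)]
    have e2 : h0 ∘ κ = f ∘ κ := by
      funext l'; simp only [hh0, Function.comp_apply]
      rw [if_neg (fun h => hd h.choose l' h.choose_spec)]
    have e3 : ∀ k, (∀ l, ι l ≠ k) → h0 k = f k := by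
      intro k hk
      simp only [hh0]
      rw [if_neg (fun h => hk h.choose h.choose_spec)]
    rw [embI_apply, embI_apply, e1, e2]
    rw [if_pos (fun k hk => (e3 k hk).symm)]
    by_cases hc : ∀ k, (∀ l, ι l ≠ k) → (∀ l', κ l' ≠ k) → f k = g k
    · rw [if_pos hc, if_pos]
      intro k hk
      by_cases hex : ∃ l, ι l = k
      · simp only [hh0, if_pos hex]
      · rw [e3 k (fun l hl => hex ⟨l, hl⟩)]
        exact hc k (fun l hl => hex ⟨l, hl⟩) hk
    · rw [if_neg hc, if_neg, mul_zero]
      intro hc'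
      refine hc (fun k hk hk' => ?_)
      rw [← e3 k hk]
      exact hc' k hk'
  · intro h _ hne
    rw [embI_apply, embI_apply]
    by_cases hP : ∀ k, (∀ l, ι l ≠ k) → f k = h k
    · by_cases hQ : ∀ k, (∀ l', κ l' ≠ k) → h k = g k
      · exfalso
        refine hne (funext fun k => ?_)
        by_cases hex : ∃ l, ι l = k
        · simp only [hh0, if_pos hex]
          obtain ⟨l, rfl⟩ := hex
          exact hQ (ι l) (fun l' hl' => hd l l' hl'.symm)
        · simp only [hh0, if_neg hex]
          exact (hP k (fun l hl => hex ⟨l, hl⟩)).symm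
      · rw [if_neg hQ, mul_zero]
    · rw [if_neg hP, zero_mul]
  · intro h; exact absurd (Finset.mem_univ h0) h

/-- Disjointly supported operators commute, provided one has central entries. -/
lemma embI_comm_disjoint {m m' n : ℕ} (ι : Fin m → Fin n) (κ : Fin m' → Fin n)
    (hd : ∀ l l', ι l ≠ κ l') (X : Op N m A) (Y : Op N m' A)
    (hc : ∀ r s a, Y r s * a = a * Y r s) :
    embI ι X * embI κ Y = embI κ Y * embI ι X := by
  ext f g
  rw [embI_mul_disjoint_apply ι κ hd X Y f g,
    embI_mul_disjoint_apply κ ι (fun l' l h => hd l l' h.symm) Y X f g]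
  have hcond : (∀ k, (∀ l, ι l ≠ k) → (∀ l', κ l' ≠ k) → f k = g k) ↔
      (∀ k, (∀ l', κ l' ≠ k) → (∀ l, ι l ≠ k) → f k = g k) :=
    ⟨fun h k h1 h2 => h k h2 h1, fun h k h1 h2 => h k h2 h1⟩
  by_cases h : ∀ k, (∀ l, ι l ≠ k) → (∀ l', κ l' ≠ k) → f k = g k
  · rw [if_pos h, if_pos (hcond.1 h), hc]
  · rw [if_neg h, if_neg (fun h' => h (hcond.2 h'))]

end EmbI


section OpAtLemmas
variable {A : Type*} [Semiring A]

lemma emb2_eq_embI {n : ℕ} (i j : Fin n) (X : Op N 2 A) :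
    emb2 i j X = embI ![i, j] X := by
  ext f g
  show (if ∀ k, k ≠ i → k ≠ j → f k = g k then X ![f i, f j] ![g i, g j] else 0) = _
  rw [embI_apply]
  have h1 : f ∘ ![i, j] = ![f i, f j] := by funext l; fin_cases l <;> rfl
  have h2 : g ∘ ![i, j] = ![g i, g j] := by funext l; fin_cases l <;> rfl
  rw [h1, h2]
  refine if_congr ?_ rfl rfl
  constructor
  · intro h k hk
    exact h k (fun he => hk 0 (by rw [Matrix.cons_val_zero, he]))
      (fun he => hk 1 (by rw [Matrix.cons_val_one, Matrix.cons_val_zero, he]))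
  · intro h k h1 h2
    refine h k (fun l => ?_)
    fin_cases l
    · simpa using Ne.symm h1
    · simpa using Ne.symm h2

lemma opAt_eq_embI {n p : ℕ} (h : p + 1 < n) (X : Op N 2 A) :
    opAt n p X = embI ![⟨p, Nat.lt_of_succ_lt h⟩, ⟨p + 1, h⟩] X := by
  rw [opAt, dif_pos h, emb2_eq_embI]

lemma inj_pair {n : ℕ} {a b : Fin n} (hab : a ≠ b) : Function.Injective ![a, b] := by
  intro l l' h
  fin_cases l <;> fin_cases l' <;> simp_all

lemma opAt_mul {n p : ℕ} (X Y : Op N 2 A) :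
    opAt n p X * opAt n p Y = opAt n p (X * Y) := by
  by_cases h : p + 1 < n
  · rw [opAt_eq_embI h, opAt_eq_embI h, opAt_eq_embI h,
      embI_mul (inj_pair (by simp [Fin.ext_iff]))]
  · simp only [opAt, dif_neg h, one_mul]

lemma opAt_one {n p : ℕ} : opAt n p (1 : Op N 2 A) = 1 := by
  by_cases h : p + 1 < n
  · rw [opAt_eq_embI h, embI_one]
  · rw [opAt, dif_neg h]

lemma opAt_comm {n p q : ℕ} (hpq : p + 2 ≤ q) (X Y : Op N 2 A)
    (hc : ∀ r s a, Y r s * a = a * Y r s) :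
    opAt n p X * opAt n q Y = opAt n q Y * opAt n p X := by
  by_cases hq : q + 1 < n
  · have hp : p + 1 < n := by omega
    rw [opAt_eq_embI hp, opAt_eq_embI hq]
    refine embI_comm_disjoint _ _ ?_ X Y hc
    intro l l'
    fin_cases l <;> fin_cases l' <;> refine Fin.ne_of_val_ne ?_ <;> simp <;> omega
  · rw [show opAt n q Y = (1 : Op N n A) from dif_neg hq, one_mul, mul_one]

end OpAtLemmas

section ToALemmas
variable {A : Type*} [Semiring A] [Algebra ℂ A]

lemma toA_mul {n : ℕ} (X Y : Op N n ℂ) : toA (X * Y) = (toA X : Op N n A) * toA Y :=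
  Matrix.map_mul (f := algebraMap ℂ A)

lemma toA_one {n : ℕ} : (toA (1 : Op N n ℂ) : Op N n A) =
    1 := Matrix.map_one _ (map_zero _) (map_one _)

lemma toA_embI {m n : ℕ} (ι : Fin m → Fin n) (X : Op N m ℂ) :
    (toA (embI ι X) : Op N n A) = embI ι (toA X) := by
  ext f g
  simp only [toA, Matrix.map_apply, embI_apply, apply_ite (algebraMap ℂ A), map_zero]

lemma toA_central {n : ℕ} (X : Op N n ℂ) (r s : Fin n → Fin N) (a : A) :
    (toA X : Op N n A) r s * a = a * toA X r s := by
  simp only [toA, Matrix.map_apply]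
  exact (Algebra.commutes (X r s) a)

end ToALemmas

section YBShift
variable {F : Op N 2 ℂ}

/-- Yang–Baxter braid relation at arbitrary adjacent positions. -/
lemma opAt_yb (hyb : opAt 3 0 F * opAt 3 1 F * opAt 3 0 F
      = opAt 3 1 F * opAt 3 0 F * opAt 3 1 F)
    {n p : ℕ} (hn : p + 3 ≤ n) :
    opAt n p F * opAt n (p + 1) F * opAt n p F
      = opAt n (p + 1) F * opAt n p F * opAt n (p + 1) F := by
  have h0 : p + 1 < n := by omega
  have h1 : p + 1 + 1 < n := by omega
  set ι : Fin 3 → Fin n := fun t => ⟨p + t, by omega⟩ with hι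
  have hinj : Function.Injective ι := by
    intro a b h
    have := congrArg Fin.val h
    simp only [hι] at this
    exact Fin.ext (by omega)
  have e0 : opAt n p F = embI ι (opAt 3 0 F) := by
    have hv : (![⟨p, Nat.lt_of_succ_lt h0⟩, ⟨p + 1, h0⟩] : Fin 2 → Fin n) =
        ι ∘ ![⟨0, by omega⟩, ⟨0 + 1, by omega⟩] := by
      funext l; fin_cases l <;> exact Fin.ext (by simp [hι])
    rw [opAt_eq_embI (show (0:ℕ) + 1 < 3 by omega), embI_comp hinj,
      opAt_eq_embI h0]
    exact congrArg (fun v : Fin 2 → Fin n => embI v F) hv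
  have e1 : opAt n (p + 1) F = embI ι (opAt 3 1 F) := by
    have hv : (![⟨p + 1, Nat.lt_of_succ_lt h1⟩, ⟨p + 1 + 1, h1⟩] : Fin 2 → Fin n) =
        ι ∘ ![⟨1, by omega⟩, ⟨1 + 1, by omega⟩] := by
      funext l; fin_cases l <;> exact Fin.ext (by simp [hι])
    rw [opAt_eq_embI (show (1:ℕ) + 1 < 3 by omega), embI_comp hinj,
      opAt_eq_embI h1]
    exact congrArg (fun v : Fin 2 → Fin n => embI v F) hv
  rw [e0, e1, embI_mul hinj, embI_mul hinj, embI_mul hinj, embI_mul hinj, hyb]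

end YBShift



section Braid
variable {F : Op N 2 ℂ}

/-- `F_s F_{s+1} ⋯ F_{s+j-1}`. -/
def FstrS (n : ℕ) (F : Op N 2 ℂ) (s : ℕ) : ℕ → Op N n ℂ
  | 0 => 1
  | (j + 1) => FstrS n F s j * opAt n (s + j) F

/-- `F_{s+j-1} ⋯ F_{s+1} F_s`. -/
def FstrDownS (n : ℕ) (F : Op N 2 ℂ) (s : ℕ) : ℕ → Op N n ℂ
  | 0 => 1
  | (j + 1) => opAt n (s + j) F * FstrDownS n F s j

/-- Shifted `Z` operators. -/
def ZopS (F : Op N 2 ℂ) (n s : ℕ) : ℕ → Op N n ℂ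
  | 0 => 1
  | (i + 1) => FstrS n F s i * ZopS F n s i

lemma FstrS_zero_eq (n : ℕ) : ∀ j, FstrS n F 0 j = Fstr n F j
  | 0 => rfl
  | (j + 1) => by rw [FstrS, Fstr, FstrS_zero_eq n j, Nat.zero_add]

lemma ZopS_zero_eq (n : ℕ) : ∀ i, ZopS F n 0 i = Zop F n i
  | 0 => rfl
  | (i + 1) => by rw [ZopS, Zop, FstrS_zero_eq, ZopS_zero_eq n i]

lemma opAt_commC {n p q : ℕ} (hpq : p + 2 ≤ q) (X Y : Op N 2 ℂ) :
    opAt n p X * opAt n q Y = opAt n q Y * opAt n p X :=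
  opAt_comm hpq X Y (fun _ _ a => mul_comm _ a)

lemma opAt_comm_FstrS {n q s : ℕ} (X : Op N 2 ℂ) :
    ∀ j, s + j + 1 ≤ q → opAt n q X * FstrS n F s j = FstrS n F s j * opAt n q X
  | 0, _ => by rw [FstrS, one_mul, mul_one]
  | (j + 1), h => by
      rw [FstrS, ← mul_assoc, opAt_comm_FstrS X j (by omega), mul_assoc,
        (opAt_commC (p := s + j) (q := q) (by omega) F X).symm, mul_assoc]

lemma opAt_comm_FstrDownS {n q s : ℕ} (X : Op N 2 ℂ) :
    ∀ j, s + j + 1 ≤ q → opAt n q X * FstrDownS n F s j = FstrDownS n F s j * opAt n q X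
  | 0, _ => by rw [FstrDownS, one_mul, mul_one]
  | (j + 1), h => by
      rw [FstrDownS, ← mul_assoc, (opAt_commC (p := s + j) (q := q) (by omega) F X).symm, mul_assoc,
        opAt_comm_FstrDownS X j (by omega), mul_assoc]

/-- Slide an `F` upward through an ascending string. -/
lemma slide_up (hyb : opAt 3 0 F * opAt 3 1 F * opAt 3 0 F
      = opAt 3 1 F * opAt 3 0 F * opAt 3 1 F) {n s : ℕ} :
    ∀ j p, p + 2 ≤ j → s + j + 1 ≤ n →
      opAt n (s + p + 1) F * FstrS n F s j = FstrS n F s j * opAt n (s + p) F := by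
  intro j
  induction j with
  | zero => intro p hp _; omega
  | succ j ih =>
      intro p hp hn
      rw [FstrS]
      rcases Nat.lt_or_ge (p + 2) (j + 1) with hlt | hge
      · rw [← mul_assoc, ih p (by omega) (by omega), mul_assoc,
          opAt_commC (p := s + p) (q := s + j) (by omega) F F, ← mul_assoc]
      · have hj : j = p + 1 := by omega
        subst hj
        rw [FstrS, show s + (p + 1) = s + p + 1 from rfl]
        have hYB := opAt_yb hyb (n := n) (p := s + p) (by omega)
        have hc := opAt_comm_FstrS (F := F) (n := n) (q := s + p + 1) (s := s) F p (by omega)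
        calc opAt n (s + p + 1) F * (FstrS n F s p * opAt n (s + p) F * opAt n (s + p + 1) F)
            = opAt n (s + p + 1) F * FstrS n F s p *
                (opAt n (s + p) F * opAt n (s + p + 1) F) := by simp only [mul_assoc]
          _ = FstrS n F s p * opAt n (s + p + 1) F *
                (opAt n (s + p) F * opAt n (s + p + 1) F) := by rw [hc]
          _ = FstrS n F s p *
                (opAt n (s + p + 1) F * opAt n (s + p) F * opAt n (s + p + 1) F) := by
              simp only [mul_assoc]
          _ = FstrS n F s p *
                (opAt n (s + p) F * opAt n (s + p + 1) F * opAt n (s + p) F) := by rw [← hYB]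
          _ = FstrS n F s p * opAt n (s + p) F * opAt n (s + p + 1) F * opAt n (s + p) F := by
              simp only [mul_assoc]

/-- Slide an `F` downward through a descending string. -/
lemma slide_down (hyb : opAt 3 0 F * opAt 3 1 F * opAt 3 0 F
      = opAt 3 1 F * opAt 3 0 F * opAt 3 1 F) {n s : ℕ} :
    ∀ j p, p + 2 ≤ j → s + j + 1 ≤ n →
      opAt n (s + p) F * FstrDownS n F s j = FstrDownS n F s j * opAt n (s + p + 1) F := by
  intro j
  induction j with
  | zero => intro p hp _; omega
  | succ j ih =>
      intro p hp hn
      rw [FstrDownS]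
      rcases Nat.lt_or_ge (p + 2) (j + 1) with hlt | hge
      · rw [← mul_assoc, opAt_commC (p := s + p) (q := s + j) (by omega) F F, mul_assoc,
          ih p (by omega) (by omega), ← mul_assoc]
      · have hj : j = p + 1 := by omega
        subst hj
        rw [FstrDownS, show s + (p + 1) = s + p + 1 from rfl]
        have hYB := opAt_yb hyb (n := n) (p := s + p) (by omega)
        have hc := opAt_comm_FstrDownS (F := F) (n := n) (q := s + p + 1) (s := s) F p (by omega)
        calc opAt n (s + p) F * (opAt n (s + p + 1) F * (opAt n (s + p) F * FstrDownS n F s p))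
            = opAt n (s + p) F * opAt n (s + p + 1) F * opAt n (s + p) F * FstrDownS n F s p := by
              simp only [mul_assoc]
          _ = opAt n (s + p + 1) F * opAt n (s + p) F * opAt n (s + p + 1) F *
                FstrDownS n F s p := by rw [hYB]
          _ = opAt n (s + p + 1) F * (opAt n (s + p) F *
                (opAt n (s + p + 1) F * FstrDownS n F s p)) := by simp only [mul_assoc]
          _ = opAt n (s + p + 1) F * (opAt n (s + p) F *
                (FstrDownS n F s p * opAt n (s + p + 1) F)) := by rw [hc]
          _ = opAt n (s + p + 1) F * (opAt n (s + p) F * FstrDownS n F s p) *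
                opAt n (s + p + 1) F := by simp only [mul_assoc]

/-- Crossing identity. -/
lemma cross (hyb : opAt 3 0 F * opAt 3 1 F * opAt 3 0 F
      = opAt 3 1 F * opAt 3 0 F * opAt 3 1 F) {n s : ℕ} :
    ∀ i, s + i + 2 ≤ n →
      FstrS n F s (i + 1) * FstrDownS n F s i
        = FstrDownS n F s (i + 1) * FstrS n F (s + 1) i := by
  intro i
  induction i with
  | zero =>
      intro _
      rw [FstrS, FstrDownS, FstrS, FstrDownS, FstrDownS, FstrS]
      simp only [one_mul, mul_one]
  | succ i ih =>
      intro hn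
      have hYB' := opAt_yb hyb (n := n) (p := s + i) (by omega)
      have c1 := opAt_comm_FstrDownS (F := F) (n := n) (q := s + i + 1) (s := s) F i (by omega)
      have c2 := opAt_comm_FstrS (F := F) (n := n) (q := s + i + 1) (s := s) F i (by omega)
      have e : s + 1 + i = s + i + 1 := by omega
      have u1 : FstrS n F s (i + 1 + 1) = FstrS n F s (i + 1) * opAt n (s + i + 1) F := rfl
      have u2 : FstrDownS n F s (i + 1 + 1)
          = opAt n (s + i + 1) F * FstrDownS n F s (i + 1) := rfl
      have u3 : FstrS n F (s + 1) (i + 1) = FstrS n F (s + 1) i * opAt n (s + 1 + i) F := rfl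
      rw [e] at u3
      have u4 : FstrDownS n F s (i + 1) = opAt n (s + i) F * FstrDownS n F s i := rfl
      have u5 : FstrS n F s (i + 1) = FstrS n F s i * opAt n (s + i) F := rfl
      have ihh := ih (by omega)
      rw [u4] at ihh
      rw [u1, u2, u3, u4]
      calc FstrS n F s (i + 1) * opAt n (s + i + 1) F *
              (opAt n (s + i) F * FstrDownS n F s i)
          = FstrS n F s i * (opAt n (s + i) F * opAt n (s + i + 1) F * opAt n (s + i) F) *
              FstrDownS n F s i := by rw [u5]; simp only [mul_assoc]
        _ = FstrS n F s i * (opAt n (s + i + 1) F * opAt n (s + i) F * opAt n (s + i + 1) F) *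
              FstrDownS n F s i := by rw [hYB']
        _ = opAt n (s + i + 1) F * FstrS n F s i * opAt n (s + i) F *
              (FstrDownS n F s i * opAt n (s + i + 1) F) := by
            rw [c2]; simp only [mul_assoc]; rw [c1]
        _ = opAt n (s + i + 1) F * (FstrS n F s (i + 1) * FstrDownS n F s i) *
              opAt n (s + i + 1) F := by rw [u5]; simp only [mul_assoc]
        _ = opAt n (s + i + 1) F * (opAt n (s + i) F * FstrDownS n F s i * FstrS n F (s + 1) i) *
              opAt n (s + i + 1) F := by rw [ihh]
        _ = opAt n (s + i + 1) F * (opAt n (s + i) F * FstrDownS n F s i) *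
              (FstrS n F (s + 1) i * opAt n (s + i + 1) F) := by simp only [mul_assoc]

/-- Garside-type decomposition of `Z`. -/
lemma garside (hyb : opAt 3 0 F * opAt 3 1 F * opAt 3 0 F
      = opAt 3 1 F * opAt 3 0 F * opAt 3 1 F) {n : ℕ} :
    ∀ i s, s + i + 1 ≤ n →
      ZopS F n s (i + 1) = FstrDownS n F s i * ZopS F n (s + 1) i := by
  intro i
  induction i with
  | zero =>
      intro s _
      rfl
  | succ i ih =>
      intro s hn
      rw [ZopS, ih s (by omega), ← mul_assoc, cross hyb i (by omega),
        show ZopS F n (s + 1) (i + 1) = FstrS n F (s + 1) i * ZopS F n (s + 1) i from rfl,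
        mul_assoc]

/-- Key commutation: `F_{s+p} Z = Z F_{s+q}` when `p+q+2` equals the level. -/
lemma Zcomm (hyb : opAt 3 0 F * opAt 3 1 F * opAt 3 0 F
      = opAt 3 1 F * opAt 3 0 F * opAt 3 1 F) {n : ℕ} :
    ∀ i s p q, p + q + 2 = i → s + i ≤ n →
      opAt n (s + p) F * ZopS F n s i = ZopS F n s i * opAt n (s + q) F := by
  intro i
  induction i with
  | zero => intro s p q hpq _; omega
  | succ i ih =>
      intro s p q hpq hn
      rcases Nat.eq_zero_or_pos p with hp0 | hppos
      · subst hp0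
        rcases Nat.eq_zero_or_pos q with hq0 | hqpos
        · -- level 2 : Z = F_s
          subst hq0
          have hi : i = 1 := by omega
          subst hi
          rw [show ZopS F n s 2 = FstrS n F s 1 * ZopS F n s 1 from rfl,
            show ZopS F n s 1 = FstrS n F s 0 * ZopS F n s 0 from rfl,
            show FstrS n F s 1 = FstrS n F s 0 * opAt n (s + 0) F from rfl,
            show (FstrS n F s 0 : Op N n ℂ) = 1 from rfl,
            show (ZopS F n s 0 : Op N n ℂ) = 1 from rfl]
          simp only [one_mul, mul_one]
        · -- p = 0, q ≥ 1, i = q + 1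
          obtain ⟨q', rfl⟩ : ∃ q', q = q' + 1 := ⟨q - 1, by omega⟩
          have hi : i = q' + 2 := by omega
          subst hi
          rw [garside hyb (q' + 2) s (by omega)]
          have hsd := slide_down hyb (n := n) (s := s) (q' + 2) 0 (by omega) (by omega)
          rw [show s + 0 + 1 = s + 1 + 0 by omega] at hsd
          have hih := ih (s + 1) 0 q' (by omega) (by omega)
          rw [← mul_assoc, hsd, mul_assoc, hih, ← mul_assoc,
            show s + 1 + q' = s + (q' + 1) by omega]
      · -- p ≥ 1
        obtain ⟨p', rfl⟩ : ∃ p', p = p' + 1 := ⟨p - 1, by omega⟩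
        rw [show ZopS F n s (i + 1) = FstrS n F s i * ZopS F n s i from rfl]
        have hsu := slide_up hyb (n := n) (s := s) i p' (by omega) (by omega)
        rw [show s + (p' + 1) = s + p' + 1 from rfl, ← mul_assoc, hsu, mul_assoc,
          ih s p' q (by omega) (by omega), ← mul_assoc]

end Braid


section MainLemmas
variable {A : Type*} [Semiring A] [Algebra ℂ A] {F Finv : Op N 2 ℂ}

/-- A one-site operator from an `N×N` matrix. -/
def op1 (Z : Matrix (Fin N) (Fin N) A) : Op N 1 A := fun f g => Z (f 0) (g 0)

lemma emb1_eq_embI {n : ℕ} (i : Fin n) (Z : Matrix (Fin N) (Fin N) A) :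
    emb1 i Z = embI ![i] (op1 Z) := by
  ext f g
  show (if ∀ k, k ≠ i → f k = g k then Z (f i) (g i) else 0) = _
  rw [embI_apply]
  refine if_congr ?_ (by simp [op1]) rfl
  constructor
  · intro h k hk
    exact h k (fun he => hk 0 (by rw [Matrix.cons_val_zero, he]))
  · intro h k hki
    refine h k (fun l => ?_)
    fin_cases l
    simpa using Ne.symm hki

lemma matAt_comm_toA {n q : ℕ} (hq : 1 ≤ q) (M : Matrix (Fin N) (Fin N) A) (X : Op N 2 ℂ) :
    matAt n 0 M * (toA (opAt n q X) : Op N n A) = toA (opAt n q X) * matAt n 0 M := by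
  by_cases hqn : q + 1 < n
  · have h0 : 0 < n := by omega
    rw [show matAt n 0 M = emb1 (⟨0, h0⟩ : Fin n) M from dif_pos h0, emb1_eq_embI,
      opAt_eq_embI hqn, toA_embI]
    refine embI_comm_disjoint _ _ ?_ _ _ (fun r s a => toA_central X r s a)
    intro l l'
    fin_cases l <;> fin_cases l' <;> refine Fin.ne_of_val_ne ?_ <;> simp <;> omega
  · rw [show opAt n q X = (1 : Op N n ℂ) from dif_neg hqn, toA_one, one_mul, mul_one]

lemma matAt_comm_toA_FstrS {n s : ℕ} (hs : 1 ≤ s) (M : Matrix (Fin N) (Fin N) A) :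
    ∀ j, matAt n 0 M * (toA (FstrS n F s j) : Op N n A) = toA (FstrS n F s j) * matAt n 0 M
  | 0 => by rw [show (FstrS n F s 0 : Op N n ℂ) = 1 from rfl, toA_one, one_mul, mul_one]
  | (j + 1) => by
      rw [show FstrS n F s (j + 1) = FstrS n F s j * opAt n (s + j) F from rfl, toA_mul,
        ← mul_assoc, matAt_comm_toA_FstrS hs M j, mul_assoc,
        matAt_comm_toA (by omega) M F, ← mul_assoc]

lemma matAt_comm_toA_ZopS {n s : ℕ} (hs : 1 ≤ s) (M : Matrix (Fin N) (Fin N) A) :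
    ∀ i, matAt n 0 M * (toA (ZopS F n s i) : Op N n A) = toA (ZopS F n s i) * matAt n 0 M
  | 0 => by rw [show (ZopS F n s 0 : Op N n ℂ) = 1 from rfl, toA_one, one_mul, mul_one]
  | (i + 1) => by
      rw [show ZopS F n s (i + 1) = FstrS n F s i * ZopS F n s i from rfl, toA_mul,
        ← mul_assoc, matAt_comm_toA_FstrS hs M i, mul_assoc, matAt_comm_toA_ZopS hs M i,
        ← mul_assoc]

lemma tF_cancel (hF : F * Finv = 1) {n p : ℕ} :
    (toA (opAt n p F) : Op N n A) * toA (opAt n p Finv) = 1 := by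
  rw [← toA_mul, opAt_mul, hF, opAt_one, toA_one]

lemma tFinv_cancel (hF' : Finv * F = 1) {n p : ℕ} :
    (toA (opAt n p Finv) : Op N n A) * toA (opAt n p F) = 1 := by
  rw [← toA_mul, opAt_mul, hF', opAt_one, toA_one]

lemma MbarDown (hF : F * Finv = 1) (hF' : Finv * F = 1) {n : ℕ}
    (M : Matrix (Fin N) (Fin N) A) :
    ∀ a, Mbar F Finv M n a * (toA (FstrDownS n F 0 a) : Op N n A)
      = toA (FstrDownS n F 0 a) * matAt n 0 M
  | 0 => by
      rw [show (FstrDownS n F 0 0 : Op N n ℂ) = 1 from rfl, toA_one, mul_one, one_mul]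
      rfl
  | (a + 1) => by
      rw [show FstrDownS n F 0 (a + 1) = opAt n (0 + a) F * FstrDownS n F 0 a from rfl,
        Nat.zero_add, toA_mul,
        show Mbar F Finv M n (a + 1)
          = toA (opAt n a F) * Mbar F Finv M n a * toA (opAt n a Finv) from rfl]
      calc toA (opAt n a F) * Mbar F Finv M n a * toA (opAt n a Finv) *
              (toA (opAt n a F) * toA (FstrDownS n F 0 a))
          = toA (opAt n a F) * Mbar F Finv M n a *
              (toA (opAt n a Finv) * toA (opAt n a F)) * toA (FstrDownS n F 0 a) := by
            simp only [mul_assoc]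
        _ = toA (opAt n a F) * (Mbar F Finv M n a * toA (FstrDownS n F 0 a)) := by
            rw [tFinv_cancel hF', mul_one]
            simp only [mul_assoc]
        _ = toA (opAt n a F) * (toA (FstrDownS n F 0 a) * matAt n 0 M) := by
            rw [MbarDown hF hF' M a]
        _ = toA (opAt n a F) * toA (FstrDownS n F 0 a) * matAt n 0 M := by
            simp only [mul_assoc]

lemma Zcomm0 (hyb : opAt 3 0 F * opAt 3 1 F * opAt 3 0 F
      = opAt 3 1 F * opAt 3 0 F * opAt 3 1 F) {n p q : ℕ} (hpq : p + q + 2 = n) :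
    opAt n p F * Zop F n n = Zop F n n * opAt n q F := by
  have h := Zcomm hyb (n := n) n 0 p q (by omega) (by omega)
  rwa [Nat.zero_add, Nat.zero_add, ZopS_zero_eq] at h

lemma Zcomm0Inv (hyb : opAt 3 0 F * opAt 3 1 F * opAt 3 0 F
      = opAt 3 1 F * opAt 3 0 F * opAt 3 1 F)
    (hF : F * Finv = 1) (hF' : Finv * F = 1) {n p q : ℕ} (hpq : p + q + 2 = n) :
    opAt n p Finv * Zop F n n = Zop F n n * opAt n q Finv := by
  have h1 := Zcomm0 hyb hpq
  have h2 : opAt n p Finv * opAt n p F = (1 : Op N n ℂ) := by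
    rw [opAt_mul, hF', opAt_one]
  have h3 : opAt n q F * opAt n q Finv = (1 : Op N n ℂ) := by
    rw [opAt_mul, hF, opAt_one]
  calc opAt n p Finv * Zop F n n
      = opAt n p Finv * (Zop F n n * (opAt n q F * opAt n q Finv)) := by rw [h3, mul_one]
    _ = opAt n p Finv * (Zop F n n * opAt n q F * opAt n q Finv) := by
        rw [mul_assoc (Zop F n n)]
    _ = opAt n p Finv * (opAt n p F * Zop F n n * opAt n q Finv) := by rw [← h1]
    _ = opAt n p Finv * opAt n p F * (Zop F n n * opAt n q Finv) := by
        simp only [mul_assoc]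
    _ = Zop F n n * opAt n q Finv := by rw [h2, one_mul]

lemma main_aux (hyb : opAt 3 0 F * opAt 3 1 F * opAt 3 0 F
      = opAt 3 1 F * opAt 3 0 F * opAt 3 1 F)
    (hF : F * Finv = 1) (hF' : Finv * F = 1) {n : ℕ} (M : Matrix (Fin N) (Fin N) A) :
    ∀ d j', j' + 1 + d = n →
      Mbar F Finv M n j' * (toA (Zop F n n) : Op N n A)
        = toA (Zop F n n) * Munder F Finv M n d := by
  intro d
  induction d with
  | zero =>
      intro j' hj
      have hn : n = j' + 1 := by omega
      subst hn
      have hg := garside hyb (n := j' + 1) j' 0 (by omega)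
      rw [Nat.zero_add] at hg
      rw [← ZopS_zero_eq, hg, toA_mul, ← mul_assoc, MbarDown hF hF' M j',
        show Munder F Finv M (j' + 1) 0 = matAt (j' + 1) 0 M from rfl, mul_assoc,
        matAt_comm_toA_ZopS (s := 1) (le_refl 1) M j', ← mul_assoc]
  | succ d ih =>
      intro j' hj
      have h1 := ih (j' + 1) (by omega)
      have hzF : (toA (opAt n j' F) : Op N n A) * toA (Zop F n n)
          = toA (Zop F n n) * toA (opAt n d F) := by
        rw [← toA_mul, ← toA_mul, Zcomm0 hyb (n := n) (p := j') (q := d) (by omega)]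
      have hzFinv : (toA (opAt n j' Finv) : Op N n A) * toA (Zop F n n)
          = toA (Zop F n n) * toA (opAt n d Finv) := by
        rw [← toA_mul, ← toA_mul, Zcomm0Inv hyb hF hF' (n := n) (p := j') (q := d) (by omega)]
      have hM : (toA (opAt n j' Finv) : Op N n A) * Mbar F Finv M n (j' + 1) *
          toA (opAt n j' F) = Mbar F Finv M n j' := by
        rw [show Mbar F Finv M n (j' + 1)
            = toA (opAt n j' F) * Mbar F Finv M n j' * toA (opAt n j' Finv) from rfl]
        calc (toA (opAt n j' Finv) : Op N n A) *
                (toA (opAt n j' F) * Mbar F Finv M n j' * toA (opAt n j' Finv)) *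
                toA (opAt n j' F)
            = (toA (opAt n j' Finv) * toA (opAt n j' F)) *
                (Mbar F Finv M n j' * (toA (opAt n j' Finv) * toA (opAt n j' F))) := by
              simp only [mul_assoc]
          _ = Mbar F Finv M n j' := by rw [tFinv_cancel hF', one_mul, mul_one]
      rw [← hM,
        show Munder F Finv M n (d + 1)
          = toA (opAt n d Finv) * Munder F Finv M n d * toA (opAt n d F) from rfl]
      calc (toA (opAt n j' Finv) : Op N n A) * Mbar F Finv M n (j' + 1) *
              toA (opAt n j' F) * toA (Zop F n n)
          = toA (opAt n j' Finv) * Mbar F Finv M n (j' + 1) *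
              (toA (opAt n j' F) * toA (Zop F n n)) := by rw [mul_assoc]
        _ = toA (opAt n j' Finv) * Mbar F Finv M n (j' + 1) *
              (toA (Zop F n n) * toA (opAt n d F)) := by rw [hzF]
        _ = toA (opAt n j' Finv) * (Mbar F Finv M n (j' + 1) * toA (Zop F n n)) *
              toA (opAt n d F) := by simp only [mul_assoc]
        _ = toA (opAt n j' Finv) * (toA (Zop F n n) * Munder F Finv M n d) *
              toA (opAt n d F) := by rw [h1]
        _ = toA (opAt n j' Finv) * toA (Zop F n n) *
              (Munder F Finv M n d * toA (opAt n d F)) := by simp only [mul_assoc]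
        _ = toA (Zop F n n) * toA (opAt n d Finv) *
              (Munder F Finv M n d * toA (opAt n d F)) := by rw [hzFinv]
        _ = toA (Zop F n n) * (toA (opAt n d Finv) * Munder F Finv M n d *
              toA (opAt n d F)) := by simp only [mul_assoc]

end MainLemmas


/-- Lemma 4.11: for any matrix `M` over `A` and any Yang-Baxter matrix
`F`, `M_{\bar j}·Z^{(i)} = Z^{(i)}·M_{\underline{i−j+1}}` for all `1 ≤ j ≤ i`. -/
theorem Mbar_Z_Munder
    {N : ℕ} (F Finv : Op N 2 ℂ)
    {A : Type*} [Ring A] [Algebra ℂ A]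
    (M : Matrix (Fin N) (Fin N) A)
    (hFyb : IsYB F) (hF : F * Finv = 1) (hF' : Finv * F = 1) :
    ∀ i : ℕ, 1 ≤ i → ∀ j : ℕ, 1 ≤ j → j ≤ i →
      Mbar F Finv M i (j - 1) * toA (Zop F i i) =
        toA (Zop F i i) * Munder F Finv M i (i - j) := by
  intro i hi j hj hji
  obtain ⟨j', rfl⟩ : ∃ j', j = j' + 1 := ⟨j - 1, by omega⟩
  have h := main_aux hFyb.2 hF hF' (n := i) M (i - (j' + 1)) j' (by omega)
  simpa using h

end
end
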